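/- (Theorem 1, existence) There exists a probability distribution (q(s) : s ∈ 𝒮_G) on the finite state space 𝒮_G such that (i) q(s') = Σ_{(s,x) ∈ 𝒮_G × A with Ṽ(s,x) = s'} q(s) p(x) for every s' ∈ 𝒮_G, and (ii) D(G) = Σ_{(s,x) ∈ 𝒮_G × A with V(s,x) ∉ 𝒮_G} q(s) p(x). -/

import Mathlib

/-- Hamming distance on the alphabet `A`. -/
def ham {A : Type*} [DecidableEq A] (x y : A) : ℕ := if x = y then 0 else 1

/-- `EdgeChain src dst n e` : the first `n` edges of the edge sequence `e` form a
directed path in the labelled graph with source map `src` and destination map `dst`. -/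
def EdgeChain {V E : Type*} (src dst : E → V) (n : ℕ) (e : ℕ → E) : Prop :=
  ∀ i : ℕ, i + 1 < n → dst (e i) = src (e (i + 1))

/-- The graph is strongly connected: for any ordered pair of vertices there is a
(nonempty) directed path from the first to the second. -/
def StronglyConnected {V E : Type*} (src dst : E → V) : Prop :=
  ∀ u v : V, ∃ (l : List E) (h : l ≠ []),
    List.Chain' (fun e f => dst e = src f) l ∧ src (l.head h) = u ∧ dst (l.getLast h) = v

/-- The Viterbi transition operator `V` : `Vop src dst lab s x v` is the minimum of
`s (src e) + d(x, lab e)` over all edges `e` ending at `v`. -/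
noncomputable def Vop {V E A : Type*} [DecidableEq A] (src dst : E → V) (lab : E → A)
    (s : V → ℕ) (x : A) : V → ℕ :=
  fun v => sInf {m : ℕ | ∃ e : E, dst e = v ∧ m = s (src e) + ham x (lab e)}

/-- Minimum component of a state. -/
noncomputable def minS {V : Type*} (s : V → ℕ) : ℕ := sInf (Set.range s)

/-- The reduced Viterbi transition operator `Ṽ`: subtract from `V(s,x)` its minimum
component. -/
noncomputable def Vred {V E A : Type*} [DecidableEq A] (src dst : E → V) (lab : E → A)
    (s : V → ℕ) (x : A) : V → ℕ :=
  fun v => Vop src dst lab s x v - minS (Vop src dst lab s x)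

/-- The Viterbi state sequence: `S⁰` is the zero state and `Sⁱ = V(S^{i-1}, xᵢ)`
(the letter `xᵢ` of the paper is `x (i-1)` here). -/
noncomputable def VSeq {V E A : Type*} [DecidableEq A] (src dst : E → V) (lab : E → A)
    (x : ℕ → A) : ℕ → V → ℕ
  | 0 => fun _ => 0
  | i + 1 => Vop src dst lab (VSeq src dst lab x i) (x i)

/-- The reduced Viterbi state sequence `S̃ⁱ(v) = Sⁱ(v) - min Sⁱ`. -/
noncomputable def SredSeq {V E A : Type*} [DecidableEq A] (src dst : E → V) (lab : E → A)
    (x : ℕ → A) (i : ℕ) : V → ℕ :=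
  fun v => VSeq src dst lab x i v - minS (VSeq src dst lab x i)

/-- The state space `𝒮_G`: the zero state together with everything obtainable from it
by finitely many applications of the reduced Viterbi transition operator. -/
def SG {V E A : Type*} [DecidableEq A] (src dst : E → V) (lab : E → A) : Set (V → ℕ) :=
  { s | ∃ l : List A, s = l.foldl (Vred src dst lab) (fun _ => 0) }

/-- `PrimIndex src dst k` : `k` is positive and any vertex can be reached from any
vertex by a directed path of length exactly `k`. -/
def PrimIndex {V E : Type*} (src dst : E → V) (k : ℕ) : Prop :=
  0 < k ∧ ∀ u v : V, ∃ e : ℕ → E,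
    EdgeChain src dst k e ∧ src (e 0) = u ∧ dst (e (k - 1)) = v

/-- Minimum total Hamming distortion over all directed paths of length `n`. -/
noncomputable def minDist {V E A : Type*} [DecidableEq A] (src dst : E → V) (lab : E → A)
    (n : ℕ) (x : Fin n → A) : ℕ :=
  sInf {m : ℕ | ∃ e : ℕ → E, EdgeChain src dst n e ∧
    m = ∑ i : Fin n, ham (x i) (lab (e i.1))}

/-- `aSeq src dst lab p n` is the expected minimum path distortion
`a_n = E[ min_{paths} Σ d(Xᵢ, L(eᵢ)) ]` for the i.i.d. source with letter distribution `p`. -/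
noncomputable def aSeq {V E A : Type*} [DecidableEq A] [Fintype A] (src dst : E → V)
    (lab : E → A) (p : A → ℝ) (n : ℕ) : ℝ :=
  ∑ x : Fin n → A, (∏ i, p (x i)) * (minDist src dst lab n x : ℝ)

section Helpers

open scoped Classical

variable {V E A : Type*} [DecidableEq A]
variable (src dst : E → V) (lab : E → A)

lemma ham_le_one (x y : A) : ham x y ≤ 1 := by unfold ham; split <;> omega

lemma minS_le (s : V → ℕ) (v : V) : minS s ≤ s v := Nat.sInf_le ⟨v, rfl⟩

lemma minS_exists [Nonempty V] (s : V → ℕ) : ∃ v, s v = minS s :=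
  Nat.sInf_mem (Set.range_nonempty s)

lemma minS_zero [Nonempty V] : minS (fun _ : V => (0:ℕ)) = 0 := by
  obtain ⟨v, hv⟩ := minS_exists (fun _ : V => (0:ℕ)); omega

lemma minS_add_const [Nonempty V] (s : V → ℕ) (c : ℕ) :
    minS (fun v => s v + c) = minS s + c := by
  obtain ⟨v₀, hv₀⟩ := minS_exists s
  obtain ⟨v₁, hv₁⟩ := minS_exists (fun v => s v + c)
  have h1 : minS (fun v => s v + c) ≤ s v₀ + c := minS_le _ v₀
  have h2 : minS s ≤ s v₁ := minS_le s v₁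
  omega

lemma Vop_le (s : V → ℕ) (x : A) {e : E} {v : V} (h : dst e = v) :
    Vop src dst lab s x v ≤ s (src e) + ham x (lab e) :=
  Nat.sInf_le ⟨e, h, rfl⟩

lemma Vop_attained (inE : V → E) (hin : ∀ v, dst (inE v) = v) (s : V → ℕ) (x : A) (v : V) :
    ∃ e : E, dst e = v ∧ Vop src dst lab s x v = s (src e) + ham x (lab e) := by
  have hne : {m : ℕ | ∃ e : E, dst e = v ∧ m = s (src e) + ham x (lab e)}.Nonempty :=
    ⟨s (src (inE v)) + ham x (lab (inE v)), inE v, hin v, rfl⟩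
  obtain ⟨e, he, hm⟩ := Nat.sInf_mem hne
  exact ⟨e, he, hm⟩

lemma Vop_add_const [Nonempty V] (inE : V → E) (hin : ∀ v, dst (inE v) = v)
    (s : V → ℕ) (c : ℕ) (x : A) :
    Vop src dst lab (fun v => s v + c) x = fun v => Vop src dst lab s x v + c := by
  funext v
  obtain ⟨e, he, hm⟩ := Vop_attained src dst lab inE hin s x v
  obtain ⟨e', he', hm'⟩ := Vop_attained src dst lab inE hin (fun v => s v + c) x v
  have h1 : Vop src dst lab (fun v => s v + c) x v ≤ (s (src e) + c) + ham x (lab e) :=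
    Nat.sInf_le ⟨e, he, rfl⟩
  have h2 : Vop src dst lab s x v ≤ s (src e') + ham x (lab e') :=
    Nat.sInf_le ⟨e', he', rfl⟩
  have hm'2 : Vop src dst lab (fun v => s v + c) x v = (s (src e') + c) + ham x (lab e') := hm'
  omega

lemma sub_minS_add (t : V → ℕ) (v : V) : (t v - minS t) + minS t = t v :=
  Nat.sub_add_cancel (minS_le t v)

lemma minS_Vred_zero [Nonempty V] (s : V → ℕ) (x : A) :
    minS (Vred src dst lab s x) = 0 := by
  obtain ⟨v₀, hv₀⟩ := minS_exists (Vop src dst lab s x)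
  have h1 : minS (Vred src dst lab s x) ≤ Vred src dst lab s x v₀ := minS_le _ v₀
  have h2 : Vred src dst lab s x v₀ = 0 := by
    show Vop src dst lab s x v₀ - minS (Vop src dst lab s x) = 0
    omega
  omega

lemma zero_mem_SG : (fun _ : V => (0:ℕ)) ∈ SG src dst lab := ⟨[], rfl⟩

lemma Vred_mem_SG {s : V → ℕ} (hs : s ∈ SG src dst lab) (a : A) :
    Vred src dst lab s a ∈ SG src dst lab := by
  obtain ⟨l, hl⟩ := hs
  exact ⟨l ++ [a], by rw [List.foldl_append, ← hl]; rfl⟩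

lemma minS_eq_zero_of_mem_SG [Nonempty V] {s : V → ℕ} (hs : s ∈ SG src dst lab) :
    minS s = 0 := by
  obtain ⟨l, hl⟩ := hs
  induction l using List.reverseRecOn with
  | nil => rw [hl]; exact minS_zero
  | append_singleton l a _ =>
    rw [List.foldl_append] at hl
    rw [hl]
    exact minS_Vred_zero src dst lab _ _

lemma minS_Vop_le_one [Nonempty V] (outE : V → E) (hout : ∀ v, src (outE v) = v)
    {s : V → ℕ} (hs : s ∈ SG src dst lab) (a : A) :
    minS (Vop src dst lab s a) ≤ 1 := by
  obtain ⟨v₀, hv₀⟩ := minS_exists s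
  have hmz := minS_eq_zero_of_mem_SG src dst lab hs
  have h1 : minS (Vop src dst lab s a) ≤ Vop src dst lab s a (dst (outE v₀)) := minS_le _ _
  have h2 : Vop src dst lab s a (dst (outE v₀)) ≤ s (src (outE v₀)) + ham a (lab (outE v₀)) :=
    Nat.sInf_le ⟨outE v₀, rfl, rfl⟩
  have h3 : ham a (lab (outE v₀)) ≤ 1 := ham_le_one _ _
  rw [hout v₀] at h2
  omega

lemma Vop_eq_Vred_of_minS_zero [Nonempty V] {s : V → ℕ} (x : A)
    (h : minS (Vop src dst lab s x) = 0) :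
    Vop src dst lab s x = Vred src dst lab s x := by
  funext v
  show Vop src dst lab s x v = Vop src dst lab s x v - minS (Vop src dst lab s x)
  omega

lemma Vop_not_mem_SG_iff [Nonempty V] (outE : V → E) (hout : ∀ v, src (outE v) = v)
    {s : V → ℕ} (hs : s ∈ SG src dst lab) (a : A) :
    Vop src dst lab s a ∉ SG src dst lab ↔ minS (Vop src dst lab s a) = 1 := by
  constructor
  · intro hnot
    have hle := minS_Vop_le_one src dst lab outE hout hs a
    rcases Nat.lt_or_ge (minS (Vop src dst lab s a)) 1 with h | h
    · exfalso
      apply hnot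
      rw [Vop_eq_Vred_of_minS_zero src dst lab a (by omega)]
      exact Vred_mem_SG src dst lab hs a
    · omega
  · intro h1 hmem
    have := minS_eq_zero_of_mem_SG src dst lab hmem
    omega

lemma VSeq_add_eq (x : ℕ → A) (n : ℕ) :
    VSeq src dst lab x n = fun v => SredSeq src dst lab x n v + minS (VSeq src dst lab x n) := by
  funext v
  exact (sub_minS_add _ v).symm

lemma minS_VSeq_succ [Nonempty V] (inE : V → E) (hin : ∀ v, dst (inE v) = v)
    (x : ℕ → A) (n : ℕ) :
    minS (VSeq src dst lab x (n+1)) =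
      minS (VSeq src dst lab x n) + minS (Vop src dst lab (SredSeq src dst lab x n) (x n)) := by
  have h1 : VSeq src dst lab x (n+1)
      = fun v => Vop src dst lab (SredSeq src dst lab x n) (x n) v + minS (VSeq src dst lab x n) := by
    have hc := Vop_add_const src dst lab inE hin (SredSeq src dst lab x n)
      (minS (VSeq src dst lab x n)) (x n)
    rw [← VSeq_add_eq src dst lab x n] at hc
    exact hc
  rw [h1, minS_add_const]
  omega

lemma SredSeq_succ [Nonempty V] (inE : V → E) (hin : ∀ v, dst (inE v) = v)
    (x : ℕ → A) (n : ℕ) :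
    SredSeq src dst lab x (n+1) = Vred src dst lab (SredSeq src dst lab x n) (x n) := by
  have h1 : VSeq src dst lab x (n+1)
      = fun v => Vop src dst lab (SredSeq src dst lab x n) (x n) v + minS (VSeq src dst lab x n) := by
    have hc := Vop_add_const src dst lab inE hin (SredSeq src dst lab x n)
      (minS (VSeq src dst lab x n)) (x n)
    rw [← VSeq_add_eq src dst lab x n] at hc
    exact hc
  funext v
  show VSeq src dst lab x (n+1) v - minS (VSeq src dst lab x (n+1)) = _
  rw [minS_VSeq_succ src dst lab inE hin, h1]
  show Vop src dst lab (SredSeq src dst lab x n) (x n) v + minS (VSeq src dst lab x n)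
      - (minS (VSeq src dst lab x n) + minS (Vop src dst lab (SredSeq src dst lab x n) (x n))) = _
  have : Vred src dst lab (SredSeq src dst lab x n) (x n) v
      = Vop src dst lab (SredSeq src dst lab x n) (x n) v
        - minS (Vop src dst lab (SredSeq src dst lab x n) (x n)) := rfl
  omega

lemma SredSeq_zero (x : ℕ → A) : SredSeq src dst lab x 0 = fun _ : V => 0 := by
  funext v
  show (0:ℕ) - minS (VSeq src dst lab x 0) = 0
  omega

lemma SredSeq_mem_SG [Nonempty V] (inE : V → E) (hin : ∀ v, dst (inE v) = v)
    (x : ℕ → A) (n : ℕ) : SredSeq src dst lab x n ∈ SG src dst lab := by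
  induction n with
  | zero => rw [SredSeq_zero]; exact zero_mem_SG src dst lab
  | succ n ih =>
    rw [SredSeq_succ src dst lab inE hin]
    exact Vred_mem_SG src dst lab ih _

lemma VSeq_congr {x x' : ℕ → A} {n : ℕ} (h : ∀ i < n, x i = x' i) :
    VSeq src dst lab x n = VSeq src dst lab x' n := by
  induction n with
  | zero => rfl
  | succ n ih =>
    show Vop src dst lab (VSeq src dst lab x n) (x n) = Vop src dst lab (VSeq src dst lab x' n) (x' n)
    rw [ih (fun i hi => h i (by omega)), h n (by omega)]

lemma SredSeq_congr {x x' : ℕ → A} {n : ℕ} (h : ∀ i < n, x i = x' i) :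
    SredSeq src dst lab x n = SredSeq src dst lab x' n := by
  unfold SredSeq
  rw [VSeq_congr src dst lab h]

/-- Cost set of paths of length `n` ending at `v`. -/
def PCost (x : ℕ → A) (n : ℕ) (v : V) : Set ℕ :=
  {m | ∃ e : ℕ → E, EdgeChain src dst n e ∧ dst (e (n-1)) = v ∧
    m = ∑ i : Fin n, ham (x i.1) (lab (e i.1))}

lemma exists_chain_to (inE : V → E) (hin : ∀ v, dst (inE v) = v) (v : V) (n : ℕ)
    (hn : 0 < n) :
    ∃ e : ℕ → E, EdgeChain src dst n e ∧ dst (e (n-1)) = v := by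
  set g : E → E := fun f => inE (src f) with hg
  have hgd : ∀ f : E, dst (g f) = src f := fun f => hin _
  set bk : ℕ → E := fun j => g^[j] (inE v) with hbk
  have hbksucc : ∀ j, bk (j+1) = g (bk j) := fun j => Function.iterate_succ_apply' g j _
  refine ⟨fun i => bk (n-1-i), ?_, ?_⟩
  · intro i hi
    show dst (bk (n-1-i)) = src (bk (n-1-(i+1)))
    have h1 : n-1-i = (n-1-(i+1)) + 1 := by omega
    rw [h1, hbksucc]
    exact hgd _
  · show dst (bk (n-1-(n-1))) = v
    have : n-1-(n-1) = 0 := by omega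
    rw [this]
    exact hin v

lemma PCost_nonempty (inE : V → E) (hin : ∀ v, dst (inE v) = v) (x : ℕ → A) (n : ℕ)
    (v : V) : (PCost src dst lab x (n+1) v).Nonempty := by
  obtain ⟨e, hch, hd⟩ := exists_chain_to src dst inE hin v (n+1) (by omega)
  exact ⟨_, e, hch, hd, rfl⟩

lemma VSeq_eq_sInf_PCost [Nonempty V] (inE : V → E) (hin : ∀ v, dst (inE v) = v)
    (x : ℕ → A) : ∀ n v, VSeq src dst lab x (n+1) v = sInf (PCost src dst lab x (n+1) v) := by
  intro n
  induction n with
  | zero =>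
    intro v
    apply le_antisymm
    · apply le_csInf (PCost_nonempty src dst lab inE hin x 0 v)
      rintro m ⟨e, _, hd, hsum⟩
      have h1 : VSeq src dst lab x 1 v ≤ (fun _ : V => 0) (src (e 0)) + ham (x 0) (lab (e 0)) :=
        Nat.sInf_le ⟨e 0, hd, rfl⟩
      rw [hsum, Fin.sum_univ_one]
      simpa using h1
    · obtain ⟨e, hd, hval⟩ := Vop_attained src dst lab inE hin (fun _ : V => 0) (x 0) v
      apply Nat.sInf_le
      refine ⟨fun _ => e, fun i hi => by omega, hd, ?_⟩
      rw [Fin.sum_univ_one]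
      simpa [VSeq] using hval
  | succ n ih =>
    intro v
    apply le_antisymm
    · apply le_csInf (PCost_nonempty src dst lab inE hin x (n+1) v)
      rintro m ⟨e, hch, hd, hsum⟩
      have hd' : dst (e (n+1)) = v := hd
      have h1 : VSeq src dst lab x (n+1+1) v
          ≤ VSeq src dst lab x (n+1) (src (e (n+1))) + ham (x (n+1)) (lab (e (n+1))) :=
        Nat.sInf_le ⟨e (n+1), hd', rfl⟩
      have h2 : VSeq src dst lab x (n+1) (src (e (n+1)))
          ≤ ∑ i : Fin (n+1), ham (x i.1) (lab (e i.1)) := by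
        rw [ih (src (e (n+1)))]
        apply Nat.sInf_le
        exact ⟨e, fun i hi => hch i (by omega), hch n (by omega), rfl⟩
      rw [hsum, Fin.sum_univ_castSucc]
      simp only [Fin.coe_castSucc, Fin.val_last]
      omega
    · obtain ⟨e', hd', hval⟩ := Vop_attained src dst lab inE hin
        (VSeq src dst lab x (n+1)) (x (n+1)) v
      rw [ih (src e')] at hval
      obtain ⟨f, hfch, hfd, hfsum⟩ := Nat.sInf_mem (PCost_nonempty src dst lab inE hin x n (src e'))
      apply Nat.sInf_le
      refine ⟨fun i => if i < n+1 then f i else e', ?_, ?_, ?_⟩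
      · intro i hi
        by_cases h : i + 1 < n + 1
        · have h1 : i < n+1 := by omega
          simp only [if_pos h, if_pos h1]
          exact hfch i (by omega)
        · have h1 : i + 1 = n + 1 := by omega
          have h2 : i < n + 1 := by omega
          have h3 : i = n := by omega
          simp only [if_pos h2, if_neg (by omega : ¬ (i+1 < n+1))]
          rw [h3]
          exact hfd
      · simpa using hd'
      · have hR : ∑ i : Fin (n+1+1), ham (x i.1) (lab (if (i:ℕ) < n+1 then f i.1 else e'))
            = ∑ i : Fin (n+1), ham (x i.1) (lab (f i.1)) + ham (x (n+1)) (lab e') := by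
          rw [Fin.sum_univ_castSucc]
          simp only [Fin.coe_castSucc, Fin.val_last]
          rw [if_neg (by omega : ¬ (n+1 < n+1))]
          congr 1
          exact Finset.sum_congr rfl (fun i _ => by rw [if_pos (by omega : (i:ℕ) < n+1)])
        rw [show VSeq src dst lab x (n+1+1) v
            = Vop src dst lab (VSeq src dst lab x (n+1)) (x (n+1)) v from rfl, hval, hfsum]
        exact hR.symm

lemma minDist_zero (e₀ : E) (xf : Fin 0 → A) : minDist src dst lab 0 xf = 0 := by
  have h0 : (0:ℕ) ∈ {m : ℕ | ∃ e : ℕ → E, EdgeChain src dst 0 e ∧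
      m = ∑ i : Fin 0, ham (xf i) (lab (e i.1))} :=
    ⟨fun _ => e₀, fun i hi => by omega, by simp⟩
  exact le_antisymm (Nat.sInf_le h0) (Nat.zero_le _)

lemma minDist_eq_minS [Nonempty V] (inE : V → E) (hin : ∀ v, dst (inE v) = v)
    (x : ℕ → A) (n : ℕ) (xf : Fin n → A) (hxf : ∀ i : Fin n, xf i = x i.1) :
    minDist src dst lab n xf = minS (VSeq src dst lab x n) := by
  cases n with
  | zero =>
    rw [minDist_zero src dst lab (inE (Classical.arbitrary V)) xf]
    exact (minS_zero).symm
  | succ n =>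
    apply le_antisymm
    · obtain ⟨v₀, hv₀⟩ := minS_exists (VSeq src dst lab x (n+1))
      rw [← hv₀, VSeq_eq_sInf_PCost src dst lab inE hin x n v₀]
      obtain ⟨f, hfch, hfd, hfsum⟩ := Nat.sInf_mem (PCost_nonempty src dst lab inE hin x n v₀)
      rw [hfsum]
      apply Nat.sInf_le
      refine ⟨f, hfch, ?_⟩
      exact Finset.sum_congr rfl (fun i _ => by rw [hxf i])
    · have hne : {m : ℕ | ∃ e : ℕ → E, EdgeChain src dst (n+1) e ∧
          m = ∑ i : Fin (n+1), ham (xf i) (lab (e i.1))}.Nonempty := by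
        obtain ⟨e, hch, _⟩ := exists_chain_to src dst inE hin (Classical.arbitrary V) (n+1)
          (by omega)
        exact ⟨_, e, hch, rfl⟩
      obtain ⟨f, hfch, hfsum⟩ := Nat.sInf_mem hne
      have h1 : minS (VSeq src dst lab x (n+1)) ≤ VSeq src dst lab x (n+1) (dst (f n)) :=
        minS_le _ _
      rw [VSeq_eq_sInf_PCost src dst lab inE hin x n (dst (f n))] at h1
      have h2 : sInf (PCost src dst lab x (n+1) (dst (f n)))
          ≤ ∑ i : Fin (n+1), ham (x i.1) (lab (f i.1)) :=
        Nat.sInf_le ⟨f, hfch, rfl, rfl⟩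
      have h3 : ∑ i : Fin (n+1), ham (x i.1) (lab (f i.1))
          = ∑ i : Fin (n+1), ham (xf i) (lab (f i.1)) :=
        Finset.sum_congr rfl (fun i _ => by rw [hxf i])
      show minS (VSeq src dst lab x (n+1)) ≤ sInf {m : ℕ | ∃ e : ℕ → E,
        EdgeChain src dst (n+1) e ∧ m = ∑ i : Fin (n+1), ham (xf i) (lab (e i.1))}
      have h5 : minS (VSeq src dst lab x (n+1))
          ≤ ∑ i : Fin (n+1), ham (xf i) (lab (f i.1)) := h3 ▸ (le_trans h1 h2)
      exact le_trans h5 (le_of_eq hfsum.symm)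

end Helpers
noncomputable def extS {A : Type*} (a0 : A) (n : ℕ) (xf : Fin n → A) : ℕ → A :=
  fun i => if h : i < n then xf ⟨i, h⟩ else a0

noncomputable def Wp {A : Type*} [Fintype A] (p : A → ℝ) (n : ℕ) (xf : Fin n → A) : ℝ :=
  ∏ i, p (xf i)

open scoped Classical in
noncomputable def muD {V E A : Type*} [Fintype A] [DecidableEq A] (src dst : E → V)
    (lab : E → A) (p : A → ℝ) (a0 : A) (n : ℕ) (s : V → ℕ) : ℝ :=
  ∑ xf : Fin n → A, Wp p n xf *
    (if SredSeq src dst lab (extS a0 n xf) n = s then 1 else 0)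

section Prob

open scoped Classical

variable {V E A : Type*} [DecidableEq A] [Fintype A]
variable (src dst : E → V) (lab : E → A)
variable {p : A → ℝ} {a0 : A}

lemma sum_snoc_eq {n : ℕ} (F : (Fin (n+1) → A) → ℝ) :
    ∑ xf : Fin (n+1) → A, F xf = ∑ y : Fin n → A, ∑ a : A, F (Fin.snoc y a) := by
  rw [← Equiv.sum_comp (Fin.snocEquiv (fun _ => A)) F, Fintype.sum_prod_type,
    Finset.sum_comm]
  exact Finset.sum_congr rfl fun y _ => Finset.sum_congr rfl fun a _ =>
    congrArg F (funext fun j => rfl)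

lemma Wp_nonneg (hp : ∀ a, 0 ≤ p a) (n : ℕ) (xf : Fin n → A) : 0 ≤ Wp p n xf :=
  Finset.prod_nonneg fun i _ => hp _

lemma Wp_snoc (n : ℕ) (y : Fin n → A) (a : A) :
    Wp p (n+1) (Fin.snoc y a) = Wp p n y * p a := by
  unfold Wp
  rw [Fin.prod_univ_castSucc]
  simp [Fin.snoc_castSucc, Fin.snoc_last]

lemma sum_Wp (hsum : ∑ a : A, p a = 1) : ∀ n, ∑ xf : Fin n → A, Wp p n xf = 1 := by
  intro n
  induction n with
  | zero => simp [Wp]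
  | succ n ih =>
    rw [sum_snoc_eq]
    calc ∑ y : Fin n → A, ∑ a : A, Wp p (n+1) (Fin.snoc y a)
        = ∑ y : Fin n → A, Wp p n y * ∑ a : A, p a := by
          refine Finset.sum_congr rfl fun y _ => ?_
          rw [Finset.mul_sum]
          exact Finset.sum_congr rfl fun a _ => Wp_snoc n y a
      _ = 1 := by rw [hsum]; simpa using ih

lemma extS_snoc_lt {n : ℕ} (y : Fin n → A) (a : A) (i : ℕ) (h : i < n) :
    extS a0 (n+1) (Fin.snoc y a) i = extS a0 n y i := by
  rw [extS, extS, dif_pos h, dif_pos (by omega : i < n+1)]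
  simp [Fin.snoc, h]

lemma extS_snoc_last {n : ℕ} (y : Fin n → A) (a : A) :
    extS a0 (n+1) (Fin.snoc y a) n = a := by
  rw [extS, dif_pos (by omega : n < n+1)]
  simp [Fin.snoc]

variable [Nonempty V]

lemma minDist_extS (inE : V → E) (hin : ∀ v, dst (inE v) = v) (a0 : A) (n : ℕ)
    (xf : Fin n → A) :
    minDist src dst lab n xf = minS (VSeq src dst lab (extS a0 n xf) n) :=
  minDist_eq_minS src dst lab inE hin _ n xf
    (fun i => by rw [extS, dif_pos i.2])

lemma minDist_snoc (inE : V → E) (hin : ∀ v, dst (inE v) = v) (a0 : A) (n : ℕ)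
    (y : Fin n → A) (a : A) :
    minDist src dst lab (n+1) (Fin.snoc y a) = minDist src dst lab n y
      + minS (Vop src dst lab (SredSeq src dst lab (extS a0 n y) n) a) := by
  rw [minDist_extS src dst lab inE hin a0 (n+1) (Fin.snoc y a),
    minS_VSeq_succ src dst lab inE hin,
    minDist_extS src dst lab inE hin a0 n y]
  have hagree : ∀ i < n, extS a0 (n+1) (Fin.snoc y a) i = extS a0 n y i :=
    fun i hi => extS_snoc_lt y a i hi
  rw [VSeq_congr src dst lab hagree, SredSeq_congr src dst lab hagree,
    extS_snoc_last y a]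

lemma aSeq_eq_sum_Wp (p : A → ℝ) (n : ℕ) :
    aSeq src dst lab p n = ∑ xf : Fin n → A, Wp p n xf * (minDist src dst lab n xf : ℝ) :=
  rfl

lemma aSeq_zero_eq (e₀ : E) (p : A → ℝ) : aSeq src dst lab p 0 = 0 := by
  rw [aSeq_eq_sum_Wp]
  refine Finset.sum_eq_zero fun xf _ => ?_
  rw [minDist_zero src dst lab e₀ xf]
  simp

lemma sum_regroup (inE : V → E) (hin : ∀ v, dst (inE v) = v)
    (hfin : (SG src dst lab).Finite) (a0 : A) (G : (V → ℕ) → ℝ) (n : ℕ) :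
    ∑ y : Fin n → A, Wp p n y * G (SredSeq src dst lab (extS a0 n y) n)
      = ∑ s ∈ hfin.toFinset, muD src dst lab p a0 n s * G s := by
  have h1 : ∑ s ∈ hfin.toFinset, muD src dst lab p a0 n s * G s
      = ∑ s ∈ hfin.toFinset, ∑ y : Fin n → A,
        Wp p n y * (if SredSeq src dst lab (extS a0 n y) n = s then 1 else 0) * G s := by
    refine Finset.sum_congr rfl fun s _ => ?_
    rw [muD, Finset.sum_mul]
  rw [h1, Finset.sum_comm]
  refine Finset.sum_congr rfl fun y _ => ?_
  have hmem : SredSeq src dst lab (extS a0 n y) n ∈ hfin.toFinset :=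
    hfin.mem_toFinset.mpr (SredSeq_mem_SG src dst lab inE hin _ n)
  have h2 : ∀ s ∈ hfin.toFinset,
      Wp p n y * (if SredSeq src dst lab (extS a0 n y) n = s then 1 else 0) * G s
      = if SredSeq src dst lab (extS a0 n y) n = s then Wp p n y * G s else 0 :=
    fun s _ => by split <;> simp
  rw [Finset.sum_congr rfl h2, Finset.sum_ite_eq, if_pos hmem]

lemma muD_nonneg (hp : ∀ a, 0 ≤ p a) (a0 : A) (n : ℕ) (s : V → ℕ) :
    0 ≤ muD src dst lab p a0 n s := by
  rw [muD]
  refine Finset.sum_nonneg fun xf _ => mul_nonneg (Wp_nonneg hp n xf) ?_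
  split <;> norm_num

lemma sum_muD (inE : V → E) (hin : ∀ v, dst (inE v) = v)
    (hfin : (SG src dst lab).Finite) (hsum : ∑ a : A, p a = 1) (a0 : A) (n : ℕ) :
    ∑ s ∈ hfin.toFinset, muD src dst lab p a0 n s = 1 := by
  have h := sum_regroup src dst lab (p := p) inE hin hfin a0 (fun _ => 1) n
  simp only [mul_one] at h
  rw [← h, sum_Wp hsum]

lemma muD_le_one (inE : V → E) (hin : ∀ v, dst (inE v) = v)
    (hfin : (SG src dst lab).Finite) (hp : ∀ a, 0 ≤ p a) (hsum : ∑ a : A, p a = 1)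
    (a0 : A) (n : ℕ) {s : V → ℕ} (hs : s ∈ hfin.toFinset) :
    muD src dst lab p a0 n s ≤ 1 := by
  have h1 := sum_muD src dst lab inE hin hfin hsum a0 n
  have h2 : muD src dst lab p a0 n s ≤ ∑ s' ∈ hfin.toFinset, muD src dst lab p a0 n s' :=
    Finset.single_le_sum (fun s' _ => muD_nonneg src dst lab hp a0 n s') hs
  linarith

lemma muD_succ (inE : V → E) (hin : ∀ v, dst (inE v) = v)
    (hfin : (SG src dst lab).Finite) (a0 : A) (n : ℕ) (s' : V → ℕ) :
    muD src dst lab p a0 (n+1) s' = ∑ s ∈ hfin.toFinset, muD src dst lab p a0 n s *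
      ∑ a : A, p a * (if Vred src dst lab s a = s' then 1 else 0) := by
  rw [muD, sum_snoc_eq]
  rw [← sum_regroup src dst lab inE hin hfin a0
    (fun s => ∑ a : A, p a * (if Vred src dst lab s a = s' then 1 else 0)) n]
  refine Finset.sum_congr rfl fun y _ => ?_
  rw [Finset.mul_sum]
  refine Finset.sum_congr rfl fun a _ => ?_
  rw [Wp_snoc]
  have hst : SredSeq src dst lab (extS a0 (n+1) (Fin.snoc y a)) (n+1)
      = Vred src dst lab (SredSeq src dst lab (extS a0 n y) n) a := by
    rw [SredSeq_succ src dst lab inE hin, extS_snoc_last y a,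
      SredSeq_congr src dst lab (fun i hi => extS_snoc_lt y a i hi)]
  rw [hst]
  ring

lemma aSeq_succ_eq (inE : V → E) (hin : ∀ v, dst (inE v) = v)
    (hfin : (SG src dst lab).Finite) (hsum : ∑ a : A, p a = 1) (a0 : A) (n : ℕ) :
    aSeq src dst lab p (n+1) = aSeq src dst lab p n
      + ∑ s ∈ hfin.toFinset, muD src dst lab p a0 n s *
          ∑ a : A, p a * (minS (Vop src dst lab s a) : ℝ) := by
  rw [← sum_regroup src dst lab inE hin hfin a0
    (fun s => ∑ a : A, p a * (minS (Vop src dst lab s a) : ℝ)) n]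
  rw [aSeq_eq_sum_Wp, sum_snoc_eq]
  have hy : ∀ y : Fin n → A,
      ∑ a : A, Wp p (n+1) (Fin.snoc y a) * (minDist src dst lab (n+1) (Fin.snoc y a) : ℝ)
      = Wp p n y * (minDist src dst lab n y : ℝ)
        + Wp p n y * ∑ a : A, p a *
            (minS (Vop src dst lab (SredSeq src dst lab (extS a0 n y) n) a) : ℝ) := by
    intro y
    have step : ∀ a : A,
        Wp p (n+1) (Fin.snoc y a) * (minDist src dst lab (n+1) (Fin.snoc y a) : ℝ)
        = Wp p n y * (minDist src dst lab n y : ℝ) * p a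
          + Wp p n y * (p a *
              (minS (Vop src dst lab (SredSeq src dst lab (extS a0 n y) n) a) : ℝ)) := by
      intro a
      rw [Wp_snoc, minDist_snoc src dst lab inE hin a0 n y a]
      push_cast
      ring
    rw [Finset.sum_congr rfl (fun a _ => step a), Finset.sum_add_distrib,
      ← Finset.mul_sum, ← Finset.mul_sum, hsum, mul_one]
  rw [Finset.sum_congr rfl (fun y _ => hy y), Finset.sum_add_distrib,
    ← aSeq_eq_sum_Wp src dst lab p n]

end Prob
section Super

open scoped Classical

variable {V E A : Type*} [DecidableEq A] [Fintype A]
variable (src dst : E → V) (lab : E → A)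
variable (p : A → ℝ)
variable [Nonempty V]

lemma exists_chain_all (outE : V → E) (hout : ∀ v, src (outE v) = v) (e₀ : E) :
    ∃ e : ℕ → E, ∀ n, EdgeChain src dst n e := by
  refine ⟨fun i => (fun f => outE (dst f))^[i] e₀, fun n i hi => ?_⟩
  show dst ((fun f => outE (dst f))^[i] e₀) = src ((fun f => outE (dst f))^[i+1] e₀)
  rw [Function.iterate_succ_apply']
  exact (hout _).symm

lemma minDist_le_sum {n : ℕ} {xf : Fin n → A} (e : ℕ → E) (hch : EdgeChain src dst n e) :
    minDist src dst lab n xf ≤ ∑ i : Fin n, ham (xf i) (lab (e i.1)) :=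
  Nat.sInf_le ⟨e, hch, rfl⟩

lemma minDist_attained (e₀ : ℕ → E) (hch₀ : ∀ n, EdgeChain src dst n e₀) (n : ℕ)
    (xf : Fin n → A) :
    ∃ e : ℕ → E, EdgeChain src dst n e ∧
      minDist src dst lab n xf = ∑ i : Fin n, ham (xf i) (lab (e i.1)) := by
  have hne : {m : ℕ | ∃ e : ℕ → E, EdgeChain src dst n e ∧
      m = ∑ i : Fin n, ham (xf i) (lab (e i.1))}.Nonempty := ⟨_, e₀, hch₀ n, rfl⟩
  exact Nat.sInf_mem hne

lemma minDist_le_n (outE : V → E) (hout : ∀ v, src (outE v) = v) (e₀ : E) (n : ℕ)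
    (xf : Fin n → A) : minDist src dst lab n xf ≤ n := by
  obtain ⟨e, hch⟩ := exists_chain_all src dst outE hout e₀
  refine le_trans (minDist_le_sum src dst lab e (hch n)) ?_
  calc ∑ i : Fin n, ham (xf i) (lab (e i.1)) ≤ ∑ _i : Fin n, 1 :=
        Finset.sum_le_sum (fun i _ => ham_le_one _ _)
    _ = n := by simp

lemma aSeq_le_n (hp : ∀ a, 0 ≤ p a) (hsum : ∑ a : A, p a = 1)
    (outE : V → E) (hout : ∀ v, src (outE v) = v) (e₀ : E) (n : ℕ) :
    aSeq src dst lab p n ≤ n := by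
  rw [aSeq_eq_sum_Wp]
  calc ∑ xf : Fin n → A, Wp p n xf * (minDist src dst lab n xf : ℝ)
      ≤ ∑ xf : Fin n → A, Wp p n xf * (n : ℝ) := by
        refine Finset.sum_le_sum fun xf _ => ?_
        refine mul_le_mul_of_nonneg_left ?_ (Wp_nonneg hp n xf)
        exact_mod_cast minDist_le_n src dst lab outE hout e₀ n xf
    _ = n := by rw [← Finset.sum_mul, sum_Wp hsum, one_mul]

lemma aSeq_superadd (hp : ∀ a, 0 ≤ p a)
    (outE : V → E) (hout : ∀ v, src (outE v) = v) (e₀ : E) (hsum : ∑ a : A, p a = 1)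
    (m n : ℕ) :
    aSeq src dst lab p m + aSeq src dst lab p n ≤ aSeq src dst lab p (m+n) := by
  obtain ⟨ec, hec⟩ := exists_chain_all src dst outE hout e₀
  -- the splitting equivalence
  set Φ : ((Fin m → A) × (Fin n → A)) ≃ (Fin (m+n) → A) :=
    (Equiv.sumArrowEquivProdArrow (Fin m) (Fin n) A).symm.trans
      (Equiv.arrowCongr finSumFinEquiv (Equiv.refl A)) with hΦ
  have hΦ1 : ∀ (y : Fin m → A) (z : Fin n → A) (i : Fin m),
      Φ (y, z) (Fin.castAdd n i) = y i := by
    intro y z i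
    simp [hΦ, Equiv.arrowCongr, Equiv.sumArrowEquivProdArrow,
      finSumFinEquiv_symm_apply_castAdd]
  have hΦ2 : ∀ (y : Fin m → A) (z : Fin n → A) (i : Fin n),
      Φ (y, z) (Fin.natAdd m i) = z i := by
    intro y z i
    simp [hΦ, Equiv.arrowCongr, Equiv.sumArrowEquivProdArrow,
      finSumFinEquiv_symm_apply_natAdd]
  have hW : ∀ (y : Fin m → A) (z : Fin n → A),
      Wp p (m+n) (Φ (y, z)) = Wp p m y * Wp p n z := by
    intro y z
    unfold Wp
    rw [← Equiv.prod_comp finSumFinEquiv (fun j => p (Φ (y, z) j)), Fintype.prod_sum_type]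
    congr 1
    · exact Finset.prod_congr rfl fun i _ => by
        rw [show finSumFinEquiv (Sum.inl i) = Fin.castAdd n i from rfl, hΦ1]
    · exact Finset.prod_congr rfl fun i _ => by
        rw [show finSumFinEquiv (Sum.inr i) = Fin.natAdd m i from rfl, hΦ2]
  have hmd : ∀ (y : Fin m → A) (z : Fin n → A),
      (minDist src dst lab m y : ℝ) + (minDist src dst lab n z : ℝ)
        ≤ (minDist src dst lab (m+n) (Φ (y, z)) : ℝ) := by
    intro y z
    obtain ⟨f, hfch, hfsum⟩ := minDist_attained src dst lab ec hec (m+n) (Φ (y, z))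
    have h1 : minDist src dst lab m y ≤ ∑ i : Fin m, ham (y i) (lab (f i.1)) := by
      have := minDist_le_sum src dst lab (xf := y) f (fun i hi => hfch i (by omega))
      exact this
    have h2 : minDist src dst lab n z
        ≤ ∑ i : Fin n, ham (z i) (lab (f (m + i.1))) := by
      refine minDist_le_sum src dst lab (fun j => f (m + j)) (fun i hi => ?_)
      exact hfch (m + i) (by omega)
    have h3 : ∑ i : Fin (m+n), ham (Φ (y, z) i) (lab (f i.1))
        = ∑ i : Fin m, ham (y i) (lab (f i.1))
          + ∑ i : Fin n, ham (z i) (lab (f (m + i.1))) := by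
      rw [Fin.sum_univ_add (f := fun i : Fin (m+n) => ham (Φ (y, z) i) (lab (f i.1)))]
      congr 1
      · exact Finset.sum_congr rfl fun i _ => by rw [hΦ1]; rfl
      · exact Finset.sum_congr rfl fun i _ => by rw [hΦ2]; rfl
    have h4 : minDist src dst lab m y + minDist src dst lab n z
        ≤ minDist src dst lab (m+n) (Φ (y, z)) := by
      rw [hfsum, h3]
      exact add_le_add h1 h2
    exact_mod_cast h4
  rw [aSeq_eq_sum_Wp src dst lab p (m+n), ← Equiv.sum_comp Φ
    (fun xf => Wp p (m+n) xf * (minDist src dst lab (m+n) xf : ℝ)), Fintype.sum_prod_type]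
  have hge : ∀ (y : Fin m → A) (z : Fin n → A),
      Wp p m y * Wp p n z * ((minDist src dst lab m y : ℝ) + (minDist src dst lab n z : ℝ))
      ≤ Wp p (m+n) (Φ (y, z)) * (minDist src dst lab (m+n) (Φ (y, z)) : ℝ) := by
    intro y z
    rw [hW]
    exact mul_le_mul_of_nonneg_left (hmd y z)
      (mul_nonneg (Wp_nonneg hp m y) (Wp_nonneg hp n z))
  calc aSeq src dst lab p m + aSeq src dst lab p n
      = ∑ y : Fin m → A, ∑ z : Fin n → A, Wp p m y * Wp p n z *
          ((minDist src dst lab m y : ℝ) + (minDist src dst lab n z : ℝ)) := by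
        rw [aSeq_eq_sum_Wp src dst lab p m, aSeq_eq_sum_Wp src dst lab p n]
        have : ∀ y : Fin m → A, ∑ z : Fin n → A, Wp p m y * Wp p n z *
            ((minDist src dst lab m y : ℝ) + (minDist src dst lab n z : ℝ))
            = Wp p m y * (minDist src dst lab m y : ℝ)
              + Wp p m y * ∑ z : Fin n → A, Wp p n z * (minDist src dst lab n z : ℝ) := by
          intro y
          have hz : ∀ z : Fin n → A, Wp p m y * Wp p n z *
              ((minDist src dst lab m y : ℝ) + (minDist src dst lab n z : ℝ))
              = Wp p m y * (minDist src dst lab m y : ℝ) * Wp p n z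
                + Wp p m y * (Wp p n z * (minDist src dst lab n z : ℝ)) := fun z => by ring
          rw [Finset.sum_congr rfl (fun z _ => hz z), Finset.sum_add_distrib,
            ← Finset.mul_sum, ← Finset.mul_sum, sum_Wp hsum, mul_one]
        rw [Finset.sum_congr rfl (fun y _ => this y), Finset.sum_add_distrib,
          ← Finset.sum_mul, sum_Wp hsum, one_mul]
    _ ≤ _ := Finset.sum_le_sum fun y _ => Finset.sum_le_sum fun z _ => hge y z

end Super
open Filter in
open scoped Classical in
/-- Theorem 1, existence: there is a probability distribution
`(q(s) : s ∈ 𝒮_G)` that is stationary for the reduced Viterbi Markov transitions and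
for which `D(G) = Σ_{(s,x) : V(s,x) ∉ 𝒮_G} q(s) p(x)`; here `D(G)` is the limit of
`a_n / n` (asserted by the `Tendsto` clause). -/
theorem exists_stationary_distribution_computing_DG
    {V E A : Type*} [Fintype V] [Nonempty V] [Fintype E] [Fintype A] [DecidableEq A]
    (src dst : E → V) (lab : E → A) (hconn : StronglyConnected src dst)
    (k : ℕ) (hk : PrimIndex src dst k)
    (p : A → ℝ) (hp : ∀ x : A, 0 ≤ p x) (hsum : ∑ x : A, p x = 1)
    (hfin : (SG src dst lab).Finite) :
    ∃ q : (V → ℕ) → ℝ,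
      (∀ s, s ∉ SG src dst lab → q s = 0) ∧
      (∀ s, 0 ≤ q s) ∧
      (∑ s ∈ hfin.toFinset, q s = 1) ∧
      (∀ s' ∈ SG src dst lab,
        q s' = ∑ s ∈ hfin.toFinset, ∑ x : A,
          if Vred src dst lab s x = s' then q s * p x else 0) ∧
      Tendsto (fun n : ℕ => aSeq src dst lab p n / n) atTop
        (nhds (∑ s ∈ hfin.toFinset, ∑ x : A,
          if Vop src dst lab s x ∉ SG src dst lab then q s * p x else 0)) := by
  classical
  -- extract in/out edge selectors from strong connectivity
  choose lfun hlne hchain hhead hlast using hconn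
  set outE : V → E := fun v => (lfun v v).head (hlne v v) with houtE
  have hout : ∀ v, src (outE v) = v := fun v => hhead v v
  set inE : V → E := fun v => (lfun v v).getLast (hlne v v) with hinE
  have hin : ∀ v, dst (inE v) = v := fun v => hlast v v
  set e₀ : E := inE (Classical.arbitrary V) with he₀
  set a0 : A := lab e₀ with ha0
  -- Fekete's lemma for the superadditive sequence aSeq
  have hsuper : Subadditive (fun n => - aSeq src dst lab p n) := by
    intro m n
    have h := aSeq_superadd src dst lab p hp outE hout e₀ hsum m n
    simp only
    linarith
  have hb0 : ∀ n : ℕ, (-1 : ℝ) ≤ - aSeq src dst lab p n / n := by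
    intro n
    rcases Nat.eq_zero_or_pos n with h0 | hpos
    · subst h0; simp
    · have h1 : aSeq src dst lab p n ≤ n := aSeq_le_n src dst lab p hp hsum outE hout e₀ n
      have h2 : (0:ℝ) < n := by exact_mod_cast hpos
      rw [neg_div, neg_le_neg_iff, div_le_one h2]
      exact h1
  have hbdd : BddBelow (Set.range fun n : ℕ => - aSeq src dst lab p n / n) := by
    refine ⟨-1, ?_⟩
    rintro x ⟨n, rfl⟩
    exact hb0 n
  have hlim := hsuper.tendsto_lim hbdd
  set L : ℝ := - hsuper.lim with hL
  have hA : Tendsto (fun n : ℕ => aSeq src dst lab p n / n) atTop (nhds L) := by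
    have h := hlim.neg
    rw [hL]
    refine h.congr fun n => ?_
    simp [neg_div]
  -- notation for the chain quantities
  set S : Finset (V → ℕ) := hfin.toFinset with hSdef
  set mu : ℕ → (V → ℕ) → ℝ := muD src dst lab p a0 with hmu
  set Gr : (V → ℕ) → ℝ := fun s => ∑ a : A, p a * (minS (Vop src dst lab s a) : ℝ) with hGr
  set Tc : (V → ℕ) → (V → ℕ) → ℝ :=
    fun s s' => ∑ a : A, p a *
      (@ite ℝ (Vred src dst lab s a = s') (Classical.propDecidable _) 1 0) with hTc
  set c : ℕ → (V → ℕ) → ℝ := fun n s => (∑ i ∈ Finset.range (n+1), mu i s) / ((n:ℝ)+1)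
    with hcdef
  have hmu_nonneg : ∀ n s, 0 ≤ mu n s := fun n s => muD_nonneg src dst lab hp a0 n s
  have hmu_le_one : ∀ (n) {s}, s ∈ S → mu n s ≤ 1 :=
    fun n s hs => muD_le_one src dst lab inE hin hfin hp hsum a0 n hs
  have hmu_sum : ∀ n, ∑ s ∈ S, mu n s = 1 :=
    fun n => sum_muD src dst lab inE hin hfin hsum a0 n
  have hmu_succ : ∀ n s', mu (n+1) s' = ∑ s ∈ S, mu n s * Tc s s' := by
    intro n s'
    simp only [hmu, hTc, hSdef]
    exact muD_succ src dst lab inE hin hfin a0 n s'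
  have haseq : ∀ n, aSeq src dst lab p (n+1)
      = aSeq src dst lab p n + ∑ s ∈ S, mu n s * Gr s :=
    fun n => aSeq_succ_eq src dst lab inE hin hfin hsum a0 n
  have haseq0 : aSeq src dst lab p 0 = 0 := aSeq_zero_eq src dst lab e₀ p
  have haseq_sum : ∀ n, aSeq src dst lab p n
      = ∑ i ∈ Finset.range n, ∑ s ∈ S, mu i s * Gr s := by
    intro n
    induction n with
    | zero => simpa using haseq0
    | succ n ih => rw [haseq n, ih, Finset.sum_range_succ]
  -- Cesàro identities
  have hkey1 : ∀ n : ℕ, aSeq src dst lab p (n+1) / ((n:ℝ)+1) = ∑ s ∈ S, c n s * Gr s := by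
    intro n
    rw [haseq_sum (n+1), Finset.sum_comm, Finset.sum_div]
    refine Finset.sum_congr rfl fun s _ => ?_
    simp only [hcdef]
    rw [← Finset.sum_mul, mul_div_right_comm]
  have hkey2 : ∀ (n : ℕ) (s'), ∑ s ∈ S, c n s * Tc s s'
      = c n s' + (mu (n+1) s' - mu 0 s') / ((n:ℝ)+1) := by
    intro n s'
    have h1 : ∀ s, c n s * Tc s s'
        = (∑ i ∈ Finset.range (n+1), mu i s * Tc s s') / ((n:ℝ)+1) := by
      intro s
      simp only [hcdef]
      rw [div_mul_eq_mul_div, Finset.sum_mul]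
    rw [Finset.sum_congr rfl (fun s _ => h1 s), ← Finset.sum_div, Finset.sum_comm]
    have h2 : ∑ i ∈ Finset.range (n+1), ∑ s ∈ S, mu i s * Tc s s'
        = ∑ i ∈ Finset.range (n+1), mu (i+1) s' :=
      Finset.sum_congr rfl (fun i _ => (hmu_succ i s').symm)
    rw [h2]
    have hs1 := Finset.sum_range_succ' (fun i => mu i s') (n+1)
    have hs2 := Finset.sum_range_succ (fun i => mu i s') (n+1)
    simp only [hcdef]
    rw [← add_div]
    congr 1
    linarith
  have hcsum : ∀ n, ∑ s ∈ S, c n s = 1 := by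
    intro n
    simp only [hcdef]
    rw [← Finset.sum_div, Finset.sum_comm, Finset.sum_congr rfl (fun i _ => hmu_sum i),
      Finset.sum_const, Finset.card_range, nsmul_eq_mul, mul_one]
    push_cast
    rw [div_self (by positivity)]
  -- compactness: extract a convergent subsequence of Cesàro averages
  have hmem : ∀ n, (fun i : {s // s ∈ S} => c n i.1) ∈ Set.Icc (0 : {s // s ∈ S} → ℝ) 1 := by
    intro n
    constructor
    · intro i
      show (0:ℝ) ≤ c n i.1
      simp only [hcdef]
      apply div_nonneg
      · exact Finset.sum_nonneg fun j _ => hmu_nonneg j i.1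
      · positivity
    · intro i
      show c n i.1 ≤ 1
      simp only [hcdef]
      rw [div_le_one (by positivity)]
      calc ∑ j ∈ Finset.range (n+1), mu j i.1 ≤ ∑ _j ∈ Finset.range (n+1), 1 :=
            Finset.sum_le_sum fun j _ => hmu_le_one j i.2
        _ = (n:ℝ)+1 := by simp
  obtain ⟨q₀, hq₀mem, ψ, hψmono, hψconv⟩ :=
    (isCompact_Icc (a := (0 : {s // s ∈ S} → ℝ)) (b := 1)).tendsto_subseq hmem
  have hcoord : ∀ i : {s // s ∈ S}, Tendsto (fun j => c (ψ j) i.1) atTop (nhds (q₀ i)) := by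
    intro i
    exact tendsto_pi_nhds.mp hψconv i
  set q : (V → ℕ) → ℝ := fun s => if h : s ∈ S then q₀ ⟨s, h⟩ else 0 with hq
  have hqc : ∀ (s) (h : s ∈ S), Tendsto (fun j => c (ψ j) s) atTop (nhds (q s)) := by
    intro s h
    have := hcoord ⟨s, h⟩
    simpa [hq, dif_pos h] using this
  refine ⟨q, ?_, ?_, ?_, ?_, ?_⟩
  · -- vanishing off SG
    intro s hs
    have hns : s ∉ S := by
      rw [hSdef, Set.Finite.mem_toFinset]
      exact hs
    simp [hq, dif_neg hns]
  · -- nonnegativity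
    intro s
    by_cases h : s ∈ S
    · have := hq₀mem.1 ⟨s, h⟩
      simpa [hq, dif_pos h] using this
    · simp [hq, dif_neg h]
  · -- total mass one
    have h1 : Tendsto (fun j => ∑ s ∈ S, c (ψ j) s) atTop (nhds (∑ s ∈ S, q s)) :=
      tendsto_finset_sum _ fun s hs => hqc s hs
    have h2 : Tendsto (fun j => ∑ s ∈ S, c (ψ j) s) atTop (nhds 1) := by
      simp only [hcsum]
      exact tendsto_const_nhds
    exact tendsto_nhds_unique h1 h2
  · -- stationarity
    intro s' hs'
    have hs'S : s' ∈ S := by rw [hSdef, Set.Finite.mem_toFinset]; exact hs'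
    have herr : Tendsto (fun j => (mu (ψ j + 1) s' - mu 0 s') / ((ψ j : ℝ)+1)) atTop
        (nhds 0) := by
      apply squeeze_zero_norm (a := fun j : ℕ => 2 / ((j:ℝ)+1))
      · intro j
        have hψj : (j:ℝ) + 1 ≤ (ψ j : ℝ) + 1 := by
          have := hψmono.le_apply (x := j)
          have : (j:ℝ) ≤ (ψ j : ℝ) := by exact_mod_cast this
          linarith
        have hpos1 : (0:ℝ) < (j:ℝ)+1 := by positivity
        have hpos2 : (0:ℝ) < (ψ j : ℝ)+1 := by positivity
        have hm1 := hmu_nonneg (ψ j + 1) s'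
        have hm2 := hmu_le_one (ψ j + 1) hs'S
        have hm3 := hmu_nonneg 0 s'
        have hm4 := hmu_le_one 0 hs'S
        have habs : |mu (ψ j + 1) s' - mu 0 s'| ≤ 2 := by
          rw [abs_le]; constructor <;> linarith
        rw [Real.norm_eq_abs, abs_div, abs_of_pos hpos2]
        calc |mu (ψ j + 1) s' - mu 0 s'| / ((ψ j : ℝ)+1) ≤ 2 / ((ψ j : ℝ)+1) :=
              div_le_div_of_nonneg_right habs hpos2.le
          _ ≤ 2 / ((j:ℝ)+1) := div_le_div_of_nonneg_left (by norm_num) hpos1 hψj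
      · have h := (tendsto_const_div_atTop_nhds_zero_nat (2:ℝ)).comp (tendsto_add_atTop_nat 1)
        refine h.congr fun j => ?_
        simp [Function.comp]
    have hLHS : Tendsto (fun j => ∑ s ∈ S, c (ψ j) s * Tc s s') atTop
        (nhds (∑ s ∈ S, q s * Tc s s')) :=
      tendsto_finset_sum _ fun s hs => (hqc s hs).mul_const _
    have hRHS : Tendsto (fun j => c (ψ j) s' + (mu (ψ j + 1) s' - mu 0 s') / ((ψ j : ℝ)+1))
        atTop (nhds (q s' + 0)) := (hqc s' hs'S).add herr
    have heqf : (fun j => ∑ s ∈ S, c (ψ j) s * Tc s s')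
        = fun j => c (ψ j) s' + (mu (ψ j + 1) s' - mu 0 s') / ((ψ j : ℝ)+1) :=
      funext fun j => hkey2 (ψ j) s'
    have hLHS' : Tendsto (fun j => c (ψ j) s' + (mu (ψ j + 1) s' - mu 0 s') / ((ψ j : ℝ)+1))
        atTop (nhds (∑ s ∈ S, q s * Tc s s')) := by
      rw [← heqf]; exact hLHS
    have hstat : ∑ s ∈ S, q s * Tc s s' = q s' + 0 :=
      tendsto_nhds_unique hLHS' hRHS
    rw [add_zero] at hstat
    rw [← hstat]
    refine Finset.sum_congr rfl fun s _ => ?_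
    simp only [hTc]
    rw [Finset.mul_sum]
    refine Finset.sum_congr rfl fun a _ => ?_
    split <;> ring
  · -- the limit identity
    have hfinal_eq : ∑ s ∈ S, ∑ a : A,
        (if Vop src dst lab s a ∉ SG src dst lab then q s * p a else 0)
        = ∑ s ∈ S, q s * Gr s := by
      refine Finset.sum_congr rfl fun s hsS => ?_
      have hsSG : s ∈ SG src dst lab := by
        rw [hSdef, Set.Finite.mem_toFinset] at hsS
        exact hsS
      simp only [hGr]
      rw [Finset.mul_sum]
      refine Finset.sum_congr rfl fun a _ => ?_
      by_cases hV : Vop src dst lab s a ∉ SG src dst lab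
      · rw [if_pos hV, (Vop_not_mem_SG_iff src dst lab outE hout hsSG a).mp hV]
        push_cast
        ring
      · rw [if_neg hV]
        push_neg at hV
        rw [minS_eq_zero_of_mem_SG src dst lab hV]
        simp
    rw [hfinal_eq]
    have hcomp : Tendsto (fun j => ψ j + 1) atTop atTop :=
      (tendsto_add_atTop_nat 1).comp hψmono.tendsto_atTop
    have hsub1 : Tendsto (fun j => aSeq src dst lab p (ψ j + 1) / ((ψ j : ℝ) + 1)) atTop
        (nhds L) := by
      have h := hA.comp hcomp
      refine h.congr fun j => ?_
      simp [Function.comp]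
    have hsub2 : Tendsto (fun j => ∑ s ∈ S, c (ψ j) s * Gr s) atTop
        (nhds (∑ s ∈ S, q s * Gr s)) :=
      tendsto_finset_sum _ fun s hs => (hqc s hs).mul_const _
    have heq2 : (fun j => aSeq src dst lab p (ψ j + 1) / ((ψ j : ℝ)+1))
        = fun j => ∑ s ∈ S, c (ψ j) s * Gr s := funext fun j => hkey1 (ψ j)
    have hsub1' : Tendsto (fun j => ∑ s ∈ S, c (ψ j) s * Gr s) atTop (nhds L) := by
      rw [← heq2]; exact hsub1
    have hfinL : ∑ s ∈ S, q s * Gr s = L :=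
      tendsto_nhds_unique hsub2 hsub1'
    rw [hfinL]
    exact hA
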